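/- Let b ≥ 2, n ≥ 2, k ≥ 0, d ≥ 1 be integers with d dividing n − 1. Let X_b^n[k] be the set of tuples (x_1, …, x_n) ∈ {0, 1, …, b−1}^n with x_1 + ⋯ + x_n = k, and let τ be the permutation defined by τ·(x_1, x_2, …, x_n) = (x_2, …, x_{n−1}, x_1, x_n). Then the number of elements of X_b^n[k] fixed by τ^((n−1)/d) equals the sum over ℓ ∈ {0, 1, …, b−1} with d dividing k − ℓ of binom^{(b)}((n−1)/d, (k−ℓ)/d). -/

import Mathlib

open Polynomial Finset

/-- `binomB b n k` is the coefficient of `t^k` in `(1 + t + ⋯ + t^(b-1))^n`. -/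
noncomputable def binomB (b n k : ℕ) : ℕ :=
  (((∑ j ∈ Finset.range b, (X : Polynomial ℕ) ^ j)) ^ n).coeff k

lemma sum_mod_period (f : ℕ → ℕ) (d e : ℕ) :
    ∑ i ∈ range (d * e), f (i % e) = d * ∑ r ∈ range e, f r := by
  induction d with
  | zero => simp
  | succ d ih =>
      rw [Nat.succ_mul, Finset.sum_range_add, ih, Nat.succ_mul]
      congr 1
      apply Finset.sum_congr rfl
      intro i hi
      rw [mem_range] at hi
      congr 1
      rw [Nat.mul_comm, Nat.mul_add_mod, Nat.mod_eq_of_lt hi]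

lemma const_of_cond {b m e : ℕ} (he : 0 < e) {x : ℕ → Fin b}
    (hx : ∀ i < m, x ((i + e) % m) = x i) :
    ∀ i < m, x i = x (i % e) := by
  have key : ∀ q r, r + q * e < m → x (r + q * e) = x r := by
    intro q
    induction q with
    | zero => simp
    | succ q ih =>
        intro r hr
        have hq1 : r + (q+1) * e = r + q * e + e := by ring
        have h1 : r + q * e < m := by omega
        have h2 : (r + q * e + e) % m = r + q * e + e := Nat.mod_eq_of_lt (by omega)
        have h3 := hx (r + q * e) h1
        rw [h2] at h3
        rw [hq1, h3, ih r h1]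
  intro i hi
  have hie : i % e + (i / e) * e = i := by
    rw [Nat.mul_comm, Nat.mod_add_div]
  have := key (i / e) (i % e) (by rw [hie]; exact hi)
  rw [hie] at this
  rw [← this]

lemma binomB_card' (b n k : ℕ) :
    ((∑ j ∈ Finset.range b, (X : Polynomial ℕ) ^ j) ^ n).coeff k
      = (Finset.univ.filter (fun x : Fin n → Fin b => ∑ i, (x i : ℕ) = k)).card := by
  have h1 : (∑ j ∈ Finset.range b, (X : Polynomial ℕ) ^ j) ^ n
      = ∏ _i : Fin n, (∑ j ∈ Finset.range b, (X : Polynomial ℕ) ^ j) := by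
    simp [Finset.prod_const]
  rw [h1, Finset.prod_univ_sum]
  simp_rw [Finset.prod_pow_eq_pow_sum]
  rw [Polynomial.finset_sum_coeff]
  simp_rw [Polynomial.coeff_X_pow]
  rw [Finset.sum_boole]
  norm_cast
  symm
  apply Finset.card_nbij (fun (x : Fin n → Fin b) (i : Fin n) => (x i : ℕ))
  · intro x hx
    simp only [Finset.mem_coe, mem_filter, mem_univ, true_and, Fintype.mem_piFinset, mem_range] at hx ⊢
    exact ⟨fun i => (x i).2, by omega⟩
  · intro x _ y _ h
    funext i
    exact Fin.ext (congrFun h i)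
  · intro g hg
    simp only [Finset.coe_filter, Set.mem_setOf_eq, mem_filter, mem_univ, true_and,
      Fintype.mem_piFinset, mem_range] at hg
    exact ⟨fun i => ⟨g i, hg.1 i⟩, by simp [hg.2], rfl⟩


/-- **Theorem (Cyclic Sieving, near-rotation case, combinatorial side).**
If `d ∣ (n-1)`, the number of tuples `(x_1, …, x_n) ∈ {0, …, b-1}^n` with `∑ x_i = k`
fixed by the `((n-1)/d)`-th power of the permutation `τ` which cyclically rotates the
first `n-1` coordinates and fixes the last equals
`∑_{ℓ=0}^{b-1, d ∣ k-ℓ} binom^(b)((n-1)/d, (k-ℓ)/d)`. -/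
theorem stmt_9 (b n k d : ℕ) (hb : 2 ≤ b) (hn : 2 ≤ n) (hd : 1 ≤ d) (hdn : d ∣ (n - 1)) :
    Nat.card {x : Fin n → Fin b //
        (∑ i, (x i : ℕ)) = k ∧
        ∀ i : Fin n, (i : ℕ) < n - 1 →
          x ⟨((i : ℕ) + (n - 1) / d) % (n - 1),
              lt_trans (Nat.mod_lt _ (by omega)) (by omega)⟩ = x i} =
      ∑ ℓ ∈ Finset.range b,
        if ℓ ≤ k ∧ d ∣ (k - ℓ) then binomB b ((n - 1) / d) ((k - ℓ) / d) else 0 := by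
  obtain ⟨m, rfl⟩ : ∃ m, n = m + 1 := ⟨n - 1, by omega⟩
  simp only [Nat.add_sub_cancel] at hdn ⊢
  have hm1 : 1 ≤ m := by omega
  obtain ⟨e, hm⟩ := hdn
  have hdiv : m / d = e := by rw [hm]; exact Nat.mul_div_cancel_left e (by omega)
  simp only [hdiv]
  have epos : 0 < e := by
    rcases Nat.eq_zero_or_pos e with h | h
    · rw [h, Nat.mul_zero] at hm; omega
    · exact h
  have hem : e ≤ m := by
    rw [hm]; exact Nat.le_mul_of_pos_left e (by omega)
  have hmodlt : ∀ a : ℕ, (a + e) % m < m + 1 :=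
    fun a => lt_trans (Nat.mod_lt _ (by omega)) (by omega)
  have hmodlt2 : ∀ a : ℕ, a % e < m + 1 :=
    fun a => lt_of_lt_of_le (Nat.mod_lt _ epos) (by omega)
  -- constancy of fixed tuples along residues mod e
  have hconst : ∀ x : Fin (m+1) → Fin b,
      (∀ i : Fin (m+1), (i : ℕ) < m →
        x ⟨((i : ℕ) + e) % m, hmodlt _⟩ = x i) →
      ∀ i, (h : i < m) → x ⟨i, by omega⟩ = x ⟨i % e, hmodlt2 _⟩ := by
    intro x hcond i hi
    set g : ℕ → Fin b := fun j => if hj : j < m + 1 then x ⟨j, hj⟩ else x ⟨m, by omega⟩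
      with hg_def
    have gdef : ∀ j (hj : j < m + 1), g j = x ⟨j, hj⟩ := fun j hj => dif_pos hj
    have hg : ∀ j < m, g ((j + e) % m) = g j := by
      intro j hj
      rw [gdef _ (hmodlt _), gdef _ (by omega)]
      exact hcond ⟨j, by omega⟩ hj
    have := const_of_cond epos hg i hi
    rw [gdef _ (by omega), gdef _ (hmodlt2 _)] at this
    exact this
  -- sum formula for fixed tuples
  have hsum : ∀ x : Fin (m+1) → Fin b,
      (∀ i : Fin (m+1), (i : ℕ) < m →
        x ⟨((i : ℕ) + e) % m, hmodlt _⟩ = x i) →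
      (∑ i, (x i : ℕ)) =
        d * (∑ r : Fin e, (x ⟨(r : ℕ), by omega⟩ : ℕ)) + (x ⟨m, by omega⟩ : ℕ) := by
    intro x hcond
    set gc : ℕ → ℕ := fun j => if hj : j < m + 1 then (x ⟨j, hj⟩ : ℕ) else 0 with hgc_def
    have gcdef : ∀ j (hj : j < m + 1), gc j = (x ⟨j, hj⟩ : ℕ) := fun j hj => dif_pos hj
    have h1 : (∑ i, (x i : ℕ)) = ∑ i ∈ range (m+1), gc i := by
      rw [← Fin.sum_univ_eq_sum_range gc (m+1)]
      apply Finset.sum_congr rfl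
      intro i _
      rw [gcdef _ i.isLt]
    rw [h1, Finset.sum_range_succ, gcdef _ (by omega)]
    congr 1
    have h2 : ∀ i ∈ range m, gc i = gc (i % e) := by
      intro i hi
      rw [mem_range] at hi
      rw [gcdef _ (by omega), gcdef _ (hmodlt2 _)]
      exact congrArg _ (hconst x hcond i hi)
    have h3 : ∑ i ∈ range m, gc (i % e) = d * ∑ r ∈ range e, gc r := by
      rw [hm]; exact sum_mod_period gc d e
    rw [Finset.sum_congr rfl h2, h3]
    congr 1
    rw [← Fin.sum_univ_eq_sum_range gc e]
    apply Finset.sum_congr rfl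
    intro r _
    rw [gcdef _ (by omega)]
  -- turn Nat.card into a filter card
  rw [Nat.card_eq_fintype_card, Fintype.card_subtype]
  rw [Finset.card_eq_sum_card_fiberwise
    (f := fun x : Fin (m+1) → Fin b => (x ⟨m, by omega⟩ : ℕ)) (t := range b)
    (fun x _ => mem_range.mpr (x ⟨m, by omega⟩).2)]
  apply Finset.sum_congr rfl
  intro ℓ hℓ
  rw [mem_range] at hℓ
  rw [Finset.filter_filter]
  by_cases h : ℓ ≤ k ∧ d ∣ (k - ℓ)
  · rw [if_pos h, binomB, binomB_card']
    apply Finset.card_nbij (fun x (r : Fin e) => x (⟨(r : ℕ), by omega⟩ : Fin (m+1)))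
    · intro x hx
      simp only [Finset.mem_coe, mem_filter, mem_univ, true_and] at hx ⊢
      obtain ⟨⟨hsx, hcx⟩, hlx⟩ := hx
      have := hsum x hcx
      rw [hsx, hlx] at this
      have hdT : d * (∑ r : Fin e, (x ⟨(r : ℕ), by omega⟩ : ℕ)) = k - ℓ := by omega
      rw [show k - ℓ = d * ((k - ℓ) / d) from (Nat.mul_div_cancel' h.2).symm] at hdT
      exact (Nat.eq_of_mul_eq_mul_left (by omega) hdT)
    · intro x hx y hy hxy
      simp only [Finset.coe_filter, Set.mem_setOf_eq, mem_univ, true_and] at hx hy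
      funext i
      rcases Nat.lt_or_ge (i : ℕ) m with hi | hi
      · have e1 : x i = x ⟨(i : ℕ), by omega⟩ := rfl
        have e2 : y i = y ⟨(i : ℕ), by omega⟩ := rfl
        rw [e1, e2, hconst x hx.1.2 _ hi, hconst y hy.1.2 _ hi]
        exact congrFun hxy (⟨(i : ℕ) % e, Nat.mod_lt _ epos⟩ : Fin e)
      · have him : (i : ℕ) = m := by omega
        have e1 : x i = x ⟨m, by omega⟩ := by congr 1; exact Fin.ext him
        have e2 : y i = y ⟨m, by omega⟩ := by congr 1; exact Fin.ext him
        rw [e1, e2]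
        exact Fin.ext (hx.2.trans hy.2.symm)
    · intro y hy
      simp only [Finset.mem_coe, Finset.coe_filter, Set.mem_setOf_eq, mem_filter,
        mem_univ, true_and] at hy
      refine ⟨fun i => if hi : (i : ℕ) < m then y ⟨(i : ℕ) % e, Nat.mod_lt _ epos⟩
        else ⟨ℓ, hℓ⟩, ?_, ?_⟩
      · set x : Fin (m+1) → Fin b := fun i => if hi : (i : ℕ) < m
          then y ⟨(i : ℕ) % e, Nat.mod_lt _ epos⟩ else ⟨ℓ, hℓ⟩ with hx_def
        have hee : e ∣ m := ⟨d, by rw [hm, Nat.mul_comm]⟩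
        have hcx : ∀ i : Fin (m+1), (i : ℕ) < m →
            x ⟨((i : ℕ) + e) % m, hmodlt _⟩ = x i := by
          intro i hi
          have h1 : ((i : ℕ) + e) % m < m := Nat.mod_lt _ (by omega)
          show (if hi : (((i : ℕ) + e) % m) < m then _ else _) = _
          rw [dif_pos h1]
          conv_rhs => rw [show x i = x ⟨(i : ℕ), by omega⟩ from rfl]
          show _ = (if hi : ((i : ℕ)) < m then _ else _)
          rw [dif_pos hi]
          congr 1
          apply Fin.ext
          show ((i : ℕ) + e) % m % e = (i : ℕ) % e
          rw [Nat.mod_mod_of_dvd _ hee, Nat.add_mod_right]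
        simp only [Finset.mem_coe, mem_filter, mem_univ, true_and]
        refine ⟨⟨?_, hcx⟩, ?_⟩
        · rw [hsum x hcx]
          have hxr : ∀ r : Fin e, (x ⟨(r : ℕ), by omega⟩ : ℕ) = (y r : ℕ) := by
            intro r
            show (((if hi : ((r : ℕ)) < m then _ else _) : Fin b) : ℕ) = _
            rw [dif_pos (by omega)]
            congr 2
            exact Fin.ext (Nat.mod_eq_of_lt r.isLt)
          have hxm : (x ⟨m, by omega⟩ : ℕ) = ℓ := by
            show (((if hi : m < m then _ else _) : Fin b) : ℕ) = ℓ
            rw [dif_neg (lt_irrefl m)]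
          rw [Finset.sum_congr rfl (fun r _ => hxr r), hxm, hy]
          have := Nat.mul_div_cancel' h.2
          omega
        · show ((if hi : m < m then _ else _ : Fin b) : ℕ) = ℓ
          rw [dif_neg (lt_irrefl m)]
      · funext r
        show (if hi : ((r : ℕ)) < m then _ else _) = _
        rw [dif_pos (by omega)]
        congr 1
        exact Fin.ext (Nat.mod_eq_of_lt r.isLt)
  · rw [if_neg h]
    rw [Finset.card_eq_zero, Finset.filter_eq_empty_iff]
    intro x _
    rintro ⟨⟨hsx, hcx⟩, hlx⟩
    have := hsum x hcx
    rw [hsx, hlx] at this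
    exact h ⟨by omega, ⟨∑ r : Fin e, (x ⟨(r : ℕ), by omega⟩ : ℕ), by omega⟩⟩
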